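/- Let T be a terrain, C a finite cover of T, and e a critical edge of T. If g_ℓ ∈ C is a left-guard of e and g_r ∈ C is a right-guard of e, then V(g_ℓ) ∩ e ∩ V(g_r) ≠ ∅. -/

import Mathlib

open Set

/-- A terrain: `n ≥ 2` vertices `v 0, …, v (n-1)` in `ℝ²` with strictly
increasing `x`-coordinates. -/
structure Terrain where
  n : ℕ
  hn : 2 ≤ n
  v : ℕ → ℝ × ℝ
  mono : ∀ i j : ℕ, i < j → j < n → (v i).1 < (v j).1

namespace Terrain

/-- The edge `e_i = [v_i, v_{i+1}]` (meaningful for `i + 1 < n`). -/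
def edge (T : Terrain) (i : ℕ) : Set (ℝ × ℝ) := segment ℝ (T.v i) (T.v (i + 1))

/-- The terrain as a subset of `ℝ²`: the union of its edges. -/
def carrier (T : Terrain) : Set (ℝ × ℝ) := ⋃ i ∈ Finset.range (T.n - 1), T.edge i

/-- The interior of the edge `e_i`: the edge minus its two endpoints. -/
def intEdge (T : Terrain) (i : ℕ) : Set (ℝ × ℝ) := T.edge i \ {T.v i, T.v (i + 1)}

/-- `p` sees `q` iff every point of the segment `[p, q]` is nowhere strictly below
the terrain, i.e. every point of the segment lies on or above the terrain point
with the same `x`-coordinate. -/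
def sees (T : Terrain) (p q : ℝ × ℝ) : Prop :=
  ∀ z ∈ segment ℝ p q, ∀ t ∈ T.carrier, t.1 = z.1 → t.2 ≤ z.2

/-- The visibility region `V(p) = {q ∈ T : p sees q}`. -/
def vis (T : Terrain) (p : ℝ × ℝ) : Set (ℝ × ℝ) := {q ∈ T.carrier | T.sees p q}

/-- `V(C) = ⋃_{g ∈ C} V(g)`. -/
def visSet (T : Terrain) (C : Set (ℝ × ℝ)) : Set (ℝ × ℝ) := ⋃ g ∈ C, T.vis g

/-- `C ⊆ T` is a cover of the terrain iff `V(C) = T`. -/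
def IsCover (T : Terrain) (C : Set (ℝ × ℝ)) : Prop :=
  C ⊆ T.carrier ∧ T.visSet C = T.carrier

/-- The vertex set `V = {v_1, …, v_n}`. -/
def vertexSet (T : Terrain) : Set (ℝ × ℝ) := {p | ∃ i < T.n, p = T.v i}

/-- Edge `e_i` is critical w.r.t. `g ∈ C`: `C \ {g}` covers some part of,
but not all of, `int(e_i)`. -/
def IsCriticalWrt (T : Terrain) (C : Set (ℝ × ℝ)) (g : ℝ × ℝ) (i : ℕ) : Prop :=
  (T.visSet (C \ {g}) ∩ T.intEdge i).Nonempty ∧ ¬ T.intEdge i ⊆ T.visSet (C \ {g})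

/-- `g` is a left-guard of `e_i`: `x(g) < x(v_i)` and `e_i` is critical w.r.t. `g`. -/
def IsLeftGuard (T : Terrain) (C : Set (ℝ × ℝ)) (g : ℝ × ℝ) (i : ℕ) : Prop :=
  g.1 < (T.v i).1 ∧ T.IsCriticalWrt C g i

/-- `g` is a right-guard of `e_i`: `x(v_{i+1}) < x(g)` and `e_i` is critical w.r.t. `g`. -/
def IsRightGuard (T : Terrain) (C : Set (ℝ × ℝ)) (g : ℝ × ℝ) (i : ℕ) : Prop :=
  (T.v (i + 1)).1 < g.1 ∧ T.IsCriticalWrt C g i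

/-- `q` is extremal in `V(p)`: `q ∈ V(p)` and `q` has maximal or minimal
`x`-coordinate within its connected component of `V(p)`. -/
def Extremal (T : Terrain) (p q : ℝ × ℝ) : Prop :=
  q ∈ T.vis p ∧
    ((∀ r ∈ connectedComponentIn (T.vis p) q, r.1 ≤ q.1) ∨
     (∀ r ∈ connectedComponentIn (T.vis p) q, q.1 ≤ r.1))

/-- The guard candidate set `U`: all vertices together with the extremal points
of the vertices' visibility regions. -/
def Uset (T : Terrain) : Set (ℝ × ℝ) :=
  T.vertexSet ∪ ⋃ i ∈ Finset.range T.n, {q | T.Extremal (T.v i) q}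

/-- `OPT(G, W)`: the minimum cardinality of a finite `C ⊆ G` with `W ⊆ V(C)`. -/
noncomputable def OPT (T : Terrain) (G W : Set (ℝ × ℝ)) : ℕ :=
  sInf {k | ∃ C : Finset (ℝ × ℝ), ↑C ⊆ G ∧ W ⊆ T.visSet ↑C ∧ C.card = k}

-- ############ auxiliary development ############

lemma seg_iff {a b q : ℝ × ℝ} :
    q ∈ segment ℝ a b ↔ ∃ s : ℝ, 0 ≤ s ∧ s ≤ 1 ∧
      q.1 = a.1 + s * (b.1 - a.1) ∧ q.2 = a.2 + s * (b.2 - a.2) := by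
  rw [segment_eq_image']
  constructor
  · rintro ⟨s, ⟨hs0, hs1⟩, rfl⟩
    exact ⟨s, hs0, hs1, by simp [Prod.ext_iff], by simp [Prod.ext_iff]⟩
  · rintro ⟨s, hs0, hs1, h1, h2⟩
    exact ⟨s, ⟨hs0, hs1⟩, by
      apply Prod.ext <;> simp [h1.symm, h2.symm]⟩

lemma seg_pt {a b : ℝ × ℝ} {s : ℝ} (hs0 : 0 ≤ s) (hs1 : s ≤ 1) :
    (a.1 + s * (b.1 - a.1), a.2 + s * (b.2 - a.2)) ∈ segment ℝ a b :=
  seg_iff.mpr ⟨s, hs0, hs1, rfl, rfl⟩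

lemma mono_le (T : Terrain) {a b : ℕ} (hab : a ≤ b) (hb : b < T.n) :
    (T.v a).1 ≤ (T.v b).1 := by
  rcases eq_or_lt_of_le hab with h | h
  · rw [h]
  · exact (T.mono a b h hb).le

/-- edge height slope point -/
noncomputable def ept (T : Terrain) (i : ℕ) (x : ℝ) : ℝ × ℝ :=
  (x, (T.v i).2 + (x - (T.v i).1) / ((T.v (i+1)).1 - (T.v i).1) * ((T.v (i+1)).2 - (T.v i).2))

lemma dpos (T : Terrain) {i : ℕ} (hi : i + 1 < T.n) : 0 < (T.v (i+1)).1 - (T.v i).1 :=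
  sub_pos.mpr (T.mono i (i+1) (Nat.lt_succ_self i) hi)

lemma ept_fst (T : Terrain) (i : ℕ) (x : ℝ) : (T.ept i x).1 = x := rfl

lemma ept_mem (T : Terrain) {i : ℕ} (hi : i + 1 < T.n) {x : ℝ}
    (h1 : (T.v i).1 ≤ x) (h2 : x ≤ (T.v (i+1)).1) : T.ept i x ∈ T.edge i := by
  have hd := T.dpos hi
  rw [edge, seg_iff]
  refine ⟨(x - (T.v i).1) / ((T.v (i+1)).1 - (T.v i).1), div_nonneg (by linarith) hd.le,
    (div_le_one hd).mpr (by linarith), ?_, rfl⟩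
  show x = (T.v i).1 + _
  field_simp
  ring

lemma mem_ept (T : Terrain) {i : ℕ} (hi : i + 1 < T.n) {q : ℝ × ℝ}
    (hq : q ∈ T.edge i) : q = T.ept i q.1 := by
  have hd := T.dpos hi
  rw [edge, seg_iff] at hq
  obtain ⟨s, hs0, hs1, h1, h2⟩ := hq
  have hx : q.1 - (T.v i).1 = s * ((T.v (i+1)).1 - (T.v i).1) := by linarith
  apply Prod.ext
  · rfl
  · show q.2 = (T.v i).2 + (q.1 - (T.v i).1) / ((T.v (i+1)).1 - (T.v i).1) * ((T.v (i+1)).2 - (T.v i).2)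
    rw [hx]
    field_simp
    linarith

lemma edge_x_mem (T : Terrain) {i : ℕ} (hi : i + 1 < T.n) {q : ℝ × ℝ}
    (hq : q ∈ T.edge i) : (T.v i).1 ≤ q.1 ∧ q.1 ≤ (T.v (i+1)).1 := by
  have hd := T.dpos hi
  rw [edge, seg_iff] at hq
  obtain ⟨s, hs0, hs1, h1, h2⟩ := hq
  constructor <;> nlinarith

lemma ept_left (T : Terrain) {i : ℕ} (hi : i + 1 < T.n) : T.ept i (T.v i).1 = T.v i := by
  have hd := T.dpos hi
  apply Prod.ext
  · rfl
  · show (T.v i).2 + _ = _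
    rw [sub_self, zero_div, zero_mul, add_zero]

lemma ept_right (T : Terrain) {i : ℕ} (hi : i + 1 < T.n) : T.ept i (T.v (i+1)).1 = T.v (i+1) := by
  have hd := T.dpos hi
  apply Prod.ext
  · rfl
  · show (T.v i).2 + _ = _
    rw [div_self (ne_of_gt hd), one_mul]
    ring

lemma edge_subset_carrier (T : Terrain) {i : ℕ} (hi : i + 1 < T.n) :
    T.edge i ⊆ T.carrier := by
  intro q hq
  rw [carrier, mem_iUnion₂]
  exact ⟨i, Finset.mem_range.mpr (by omega), hq⟩

lemma carrier_elim (T : Terrain) {t : ℝ × ℝ} (ht : t ∈ T.carrier) :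
    ∃ j, j + 1 < T.n ∧ t ∈ T.edge j := by
  rw [carrier, mem_iUnion₂] at ht
  obtain ⟨j, hj, hmem⟩ := ht
  have := Finset.mem_range.mp hj
  have hn := T.hn
  exact ⟨j, by omega, hmem⟩

lemma graph_aux (T : Terrain) {j k : ℕ} (hjk : j ≤ k) (hj : j + 1 < T.n) (hk : k + 1 < T.n)
    {t u : ℝ × ℝ} (ht : t ∈ T.edge j) (hu : u ∈ T.edge k) (hx : t.1 = u.1) : t = u := by
  rcases eq_or_lt_of_le hjk with rfl | hlt
  · rw [T.mem_ept hj ht, T.mem_ept hj hu, hx]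
  · -- j < k
    have h1 := T.edge_x_mem hj ht
    have h2 := T.edge_x_mem hk hu
    have h3 : (T.v (j+1)).1 ≤ (T.v k).1 := T.mono_le (by omega) (by omega)
    have ht1 : t.1 = (T.v (j+1)).1 := le_antisymm h1.2 (by linarith [h2.1, hx])
    have hu1 : u.1 = (T.v k).1 := le_antisymm (by linarith [h1.2, hx]) h2.1
    have hjk1 : j + 1 = k := by
      by_contra hne
      have : j + 1 < k := by omega
      have := T.mono (j+1) k this (by omega)
      rw [← ht1, ← hu1, hx] at this
      exact lt_irrefl _ this
    have h4 : t = T.v (j+1) := by rw [T.mem_ept hj ht, ht1, T.ept_right hj]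
    have h5 : u = T.v k := by rw [T.mem_ept hk hu, hu1, T.ept_left hk]
    rw [h4, h5, hjk1]
  
lemma graph (T : Terrain) {t u : ℝ × ℝ} (ht : t ∈ T.carrier) (hu : u ∈ T.carrier)
    (hx : t.1 = u.1) : t = u := by
  obtain ⟨j, hj, htj⟩ := T.carrier_elim ht
  obtain ⟨k, hk, huk⟩ := T.carrier_elim hu
  rcases le_total j k with h | h
  · exact T.graph_aux h hj hk htj huk hx
  · exact (T.graph_aux h hk hj huk htj hx.symm).symm

lemma carrier_x_bounds (T : Terrain) {t : ℝ × ℝ} (ht : t ∈ T.carrier) :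
    (T.v 0).1 ≤ t.1 ∧ t.1 ≤ (T.v (T.n - 1)).1 := by
  obtain ⟨j, hj, htj⟩ := T.carrier_elim ht
  have h1 := T.edge_x_mem hj htj
  have h2 : (T.v 0).1 ≤ (T.v j).1 := T.mono_le (by omega) (by omega)
  have h3 : (T.v (j+1)).1 ≤ (T.v (T.n - 1)).1 := T.mono_le (by omega) (by omega)
  exact ⟨by linarith [h1.1], by linarith [h1.2]⟩

lemma same_edge_sees (T : Terrain) {i : ℕ} (hi : i + 1 < T.n) {p q : ℝ × ℝ}
    (hp : p ∈ T.edge i) (hq : q ∈ T.edge i) : T.sees p q := by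
  intro z hz t ht htz
  have hzc : z ∈ T.edge i := by
    have : Convex ℝ (T.edge i) := convex_segment _ _
    exact this.segment_subset hp hq hz
  have := T.graph ht (T.edge_subset_carrier hi hzc) htz
  rw [this]

/-- `q ∈ edge i` satisfies the cross-multiplied line equation. -/
lemma edge_coord (T : Terrain) {i : ℕ} (hi : i + 1 < T.n) {q : ℝ × ℝ}
    (hq : q ∈ T.edge i) :
    (q.2 - (T.v i).2) * ((T.v (i+1)).1 - (T.v i).1)
      = (q.1 - (T.v i).1) * ((T.v (i+1)).2 - (T.v i).2) := by
  have hd := T.dpos hi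
  rw [edge, seg_iff] at hq
  obtain ⟨s, hs0, hs1, h1, h2⟩ := hq
  have hx : q.1 - (T.v i).1 = s * ((T.v (i+1)).1 - (T.v i).1) := by linarith
  have hy : q.2 - (T.v i).2 = s * ((T.v (i+1)).2 - (T.v i).2) := by linarith
  rw [hx, hy]; ring

/-- Key geometric fact: if `g` sees an interior point `p` of edge `i` from the side
(`g.1 ≠ p.1`), then `g` lies on or above the line extending edge `i`. -/
lemma key0 (T : Terrain) {i : ℕ} (hi : i + 1 < T.n) {g p : ℝ × ℝ}
    (hp : p ∈ T.edge i) (hpl : (T.v i).1 < p.1) (hpr : p.1 < (T.v (i+1)).1)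
    (hg : g.1 ≠ p.1) (hsee : T.sees g p) :
    (g.1 - (T.v i).1) * ((T.v (i+1)).2 - (T.v i).2)
      + ((T.v i).2 - g.2) * ((T.v (i+1)).1 - (T.v i).1) ≤ 0 := by
  have hd := T.dpos hi
  have ep := T.edge_coord hi hp
  rcases lt_or_gt_of_ne hg with hgl | hgr
  · -- g left of p
    set u : ℝ := (max g.1 (T.v i).1 + p.1) / 2 with hu
    have hu1 : g.1 < u := by
      have h := le_max_left g.1 (T.v i).1
      rw [hu]; linarith
    have hu2 : (T.v i).1 ≤ u := by
      have h := le_max_right g.1 (T.v i).1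
      rw [hu]; linarith
    have hu3 : u < p.1 := by
      have h := max_lt hgl hpl
      rw [hu]; linarith
    have hu4 : u ≤ (T.v (i+1)).1 := by linarith [(T.edge_x_mem hi hp).2]
    have hw : T.ept i u ∈ T.edge i := T.ept_mem hi hu2 hu4
    have ew := T.edge_coord hi hw
    rw [ept_fst] at ew
    -- point on segment [g,p] at x = u
    have hA : (0:ℝ) < p.1 - g.1 := by linarith
    set s : ℝ := (u - g.1) / (p.1 - g.1) with hs
    have hs0 : 0 ≤ s := div_nonneg (by linarith) hA.le
    have hs1 : s ≤ 1 := (div_le_one hA).mpr (by linarith)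
    have hz := hsee _ (seg_pt hs0 hs1) _ (T.edge_subset_carrier hi hw)
      (by
        have hne : p.1 - g.1 ≠ 0 := ne_of_gt hA
        show u = g.1 + s * (p.1 - g.1)
        rw [hs]; field_simp; ring)
    -- hz : (ept i u).2 ≤ g.2 + s * (p.2 - g.2)
    have hz' : (T.ept i u).2 * (p.1 - g.1) ≤ g.2 * (p.1 - g.1) + (u - g.1) * (p.2 - g.2) := by
      have := mul_le_mul_of_nonneg_right hz hA.le
      calc (T.ept i u).2 * (p.1 - g.1) ≤ (g.2 + s * (p.2 - g.2)) * (p.1 - g.1) := this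
        _ = g.2 * (p.1 - g.1) + (u - g.1) * (p.2 - g.2) := by
              have hne : p.1 - g.1 ≠ 0 := ne_of_gt hA
              rw [hs]; field_simp; all_goals ring
    nlinarith [mul_le_mul_of_nonneg_right hz' hd.le, sub_pos.mpr hu3,
      mul_pos (sub_pos.mpr hu3) hd]
  · -- g right of p
    set u : ℝ := (p.1 + min g.1 (T.v (i+1)).1) / 2 with hu
    have hu1 : u < g.1 := by
      have h := min_le_left g.1 (T.v (i+1)).1
      rw [hu]; linarith
    have hu2 : u ≤ (T.v (i+1)).1 := by
      have h := min_le_right g.1 (T.v (i+1)).1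
      rw [hu]; linarith
    have hu3 : p.1 < u := by
      have h := lt_min hgr hpr
      rw [hu]; linarith
    have hu4 : (T.v i).1 ≤ u := by linarith
    have hw : T.ept i u ∈ T.edge i := T.ept_mem hi hu4 hu2
    have ew := T.edge_coord hi hw
    rw [ept_fst] at ew
    have hA : (0:ℝ) < g.1 - p.1 := by linarith
    set s : ℝ := (u - g.1) / (p.1 - g.1) with hs
    have hs' : s = (g.1 - u) / (g.1 - p.1) := by rw [hs]; rw [div_eq_div_iff (by linarith) (by linarith)]; ring
    have hs0 : 0 ≤ s := by rw [hs']; exact div_nonneg (by linarith) hA.le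
    have hs1 : s ≤ 1 := by rw [hs']; exact (div_le_one hA).mpr (by linarith)
    have hz := hsee _ (seg_pt hs0 hs1) _ (T.edge_subset_carrier hi hw)
      (by
        have hne : p.1 - g.1 ≠ 0 := ne_of_lt (by linarith)
        show u = g.1 + s * (p.1 - g.1)
        rw [hs]; field_simp; ring)
    have hz' : (T.ept i u).2 * (g.1 - p.1) ≤ g.2 * (g.1 - p.1) + (g.1 - u) * (p.2 - g.2) := by
      have := mul_le_mul_of_nonneg_right hz hA.le
      calc (T.ept i u).2 * (g.1 - p.1) ≤ (g.2 + s * (p.2 - g.2)) * (g.1 - p.1) := this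
        _ = g.2 * (g.1 - p.1) + (g.1 - u) * (p.2 - g.2) := by
              rw [hs']
              have hne : g.1 - p.1 ≠ 0 := ne_of_gt hA
              field_simp
              all_goals ring
    nlinarith [mul_le_mul_of_nonneg_right hz' hd.le, sub_pos.mpr hu3,
      mul_pos (sub_pos.mpr hu3) hd]

lemma mul_nn {a b : ℝ} (ha : a ≤ 0) (hb : b ≤ 0) : 0 ≤ a * b := by nlinarith

/-- cross identity -/
lemma cross_id (T : Terrain) {i : ℕ} (hi : i + 1 < T.n) (g : ℝ × ℝ) {p m : ℝ × ℝ}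
    (hp : p ∈ T.edge i) (hm : m ∈ T.edge i) :
    ((m.2 - g.2) * (p.1 - g.1) - (m.1 - g.1) * (p.2 - g.2)) * ((T.v (i+1)).1 - (T.v i).1)
      = (p.1 - m.1) * ((g.1 - (T.v i).1) * ((T.v (i+1)).2 - (T.v i).2)
          + ((T.v i).2 - g.2) * ((T.v (i+1)).1 - (T.v i).1)) := by
  have em := T.edge_coord hi hm
  have ep := T.edge_coord hi hp
  linear_combination (p.1 - g.1) * em - (m.1 - g.1) * ep

/-- a segment from a point above the edge line to a point of the edge stays above
the edge line (hence above the edge) over the edge's x-range -/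
lemma seg_above_edge (T : Terrain) {i : ℕ} (hi : i + 1 < T.n) {g m : ℝ × ℝ}
    (hm : m ∈ T.edge i)
    (K0 : (g.1 - (T.v i).1) * ((T.v (i+1)).2 - (T.v i).2)
        + ((T.v i).2 - g.2) * ((T.v (i+1)).1 - (T.v i).1) ≤ 0)
    {a x y : ℝ} (ha0 : 0 ≤ a) (ha1 : a ≤ 1)
    (hx : x = g.1 + a * (m.1 - g.1)) (hy : y = g.2 + a * (m.2 - g.2))
    (hx1 : (T.v i).1 ≤ x) (hx2 : x ≤ (T.v (i+1)).1) :
    (T.ept i x).2 ≤ y := by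
  have hd := T.dpos hi
  have em := T.edge_coord hi hm
  have et := T.edge_coord hi (T.ept_mem hi hx1 hx2)
  rw [ept_fst] at et
  have ema : a * ((m.2 - (T.v i).2) * ((T.v (i+1)).1 - (T.v i).1))
      = a * ((m.1 - (T.v i).1) * ((T.v (i+1)).2 - (T.v i).2)) := by rw [em]
  have hK : 0 ≤ (a - 1) * ((g.1 - (T.v i).1) * ((T.v (i+1)).2 - (T.v i).2)
      + ((T.v i).2 - g.2) * ((T.v (i+1)).1 - (T.v i).1)) :=
    mul_nn (by linarith) K0
  subst hx hy
  nlinarith [et, ema, hK, hd]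

lemma lemmaA (T : Terrain) {i : ℕ} (hi : i + 1 < T.n) {g p m : ℝ × ℝ}
    (hp : p ∈ T.edge i) (hpl : (T.v i).1 < p.1) (hpr : p.1 < (T.v (i+1)).1)
    (hg : g.1 < p.1) (hsee : T.sees g p)
    (hm : m ∈ T.edge i) (hpm : p.1 ≤ m.1) : T.sees g m := by
  have hd := T.dpos hi
  have K0 := T.key0 hi hp hpl hpr (ne_of_lt hg) hsee
  have hcross := T.cross_id hi g hp hm
  have key1 : 0 ≤ (m.2 - g.2) * (p.1 - g.1) - (m.1 - g.1) * (p.2 - g.2) := by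
    have hprod : 0 ≤ (p.1 - m.1) * ((g.1 - (T.v i).1) * ((T.v (i+1)).2 - (T.v i).2)
        + ((T.v i).2 - g.2) * ((T.v (i+1)).1 - (T.v i).1)) :=
      mul_nn (by linarith) K0
    nlinarith [hcross, hprod, hd]
  have hmx := T.edge_x_mem hi hm
  have hne : p.1 - g.1 ≠ 0 := ne_of_gt (by linarith)
  intro z hz t ht htz
  obtain ⟨a, ha0, ha1, hz1, hz2⟩ := seg_iff.mp hz
  have hgm : g.1 < m.1 := by linarith
  rcases le_or_gt z.1 p.1 with hcase | hcase
  · -- left part : compare with the segment [g,p]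
    have hzx0 : g.1 ≤ z.1 := by nlinarith [mul_nonneg ha0 (by linarith : (0:ℝ) ≤ m.1 - g.1)]
    set s : ℝ := (z.1 - g.1) / (p.1 - g.1) with hs
    have hs0 : 0 ≤ s := div_nonneg (by linarith) (by linarith)
    have hs1 : s ≤ 1 := (div_le_one (by linarith)).mpr (by linarith)
    have ht2 := hsee _ (seg_pt hs0 hs1) _ ht (by rw [htz]; show z.1 = g.1 + s * (p.1 - g.1); rw [hs]; field_simp; ring)
    -- ht2 : t.2 ≤ g.2 + s * (p.2 - g.2)
    have hse : s * (p.1 - g.1) = z.1 - g.1 := div_mul_cancel₀ _ hne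
    have hfin : s * (p.2 - g.2) ≤ a * (m.2 - g.2) := by
      have h1 := mul_le_mul_of_nonneg_left key1 ha0
      have hApos : (0:ℝ) < p.1 - g.1 := by linarith
      have hse2 : s * (p.1 - g.1) * (p.2 - g.2) = a * (m.1 - g.1) * (p.2 - g.2) := by
        rw [hse, hz1]; ring
      nlinarith [hse2, h1, hApos]
    have ht2' : t.2 ≤ g.2 + s * (p.2 - g.2) := ht2
    linarith [ht2', hfin, hz2.ge, hz2.le]
  · -- right part : above the edge line
    have hzx1 : z.1 ≤ m.1 := by
      have h1 : a * (m.1 - g.1) ≤ 1 * (m.1 - g.1) := mul_le_mul_of_nonneg_right ha1 (by linarith)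
      linarith [hz1.le, hz1.ge]
    have hx1 : (T.v i).1 ≤ z.1 := by linarith
    have hx2 : z.1 ≤ (T.v (i+1)).1 := by linarith [hmx.2]
    have habove := T.seg_above_edge hi hm K0 ha0 ha1 hz1 hz2 hx1 hx2
    have hteq : t = T.ept i z.1 :=
      T.graph ht (T.edge_subset_carrier hi (T.ept_mem hi hx1 hx2)) (by rw [ept_fst]; exact htz)
    rw [hteq]
    exact habove

lemma lemmaB (T : Terrain) {i : ℕ} (hi : i + 1 < T.n) {g p m : ℝ × ℝ}
    (hp : p ∈ T.edge i) (hpl : (T.v i).1 < p.1) (hpr : p.1 < (T.v (i+1)).1)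
    (hg : p.1 < g.1) (hsee : T.sees g p)
    (hm : m ∈ T.edge i) (hmp : m.1 ≤ p.1) : T.sees g m := by
  have hd := T.dpos hi
  have K0 := T.key0 hi hp hpl hpr (ne_of_gt hg) hsee
  have hcross := T.cross_id hi g hp hm
  have key1 : (m.2 - g.2) * (p.1 - g.1) - (m.1 - g.1) * (p.2 - g.2) ≤ 0 := by
    have hprod : (p.1 - m.1) * ((g.1 - (T.v i).1) * ((T.v (i+1)).2 - (T.v i).2)
        + ((T.v i).2 - g.2) * ((T.v (i+1)).1 - (T.v i).1)) ≤ 0 :=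
      mul_nonpos_of_nonneg_of_nonpos (by linarith) K0
    nlinarith [hcross, hprod, hd]
  have hmx := T.edge_x_mem hi hm
  have hne : p.1 - g.1 ≠ 0 := ne_of_lt (by linarith)
  intro z hz t ht htz
  obtain ⟨a, ha0, ha1, hz1, hz2⟩ := seg_iff.mp hz
  have hgm : m.1 < g.1 := by linarith
  rcases le_or_gt p.1 z.1 with hcase | hcase
  · -- right part : compare with the segment [g,p]
    have hzx0 : z.1 ≤ g.1 := by nlinarith [mul_nonneg ha0 (by linarith : (0:ℝ) ≤ g.1 - m.1)]
    set s : ℝ := (z.1 - g.1) / (p.1 - g.1) with hs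
    have hs' : s = (g.1 - z.1) / (g.1 - p.1) := by
      rw [hs, div_eq_div_iff (by linarith) (by linarith)]; ring
    have hs0 : 0 ≤ s := by rw [hs']; exact div_nonneg (by linarith) (by linarith)
    have hs1 : s ≤ 1 := by rw [hs']; exact (div_le_one (by linarith)).mpr (by linarith)
    have ht2 := hsee _ (seg_pt hs0 hs1) _ ht
      (by rw [htz]; show z.1 = g.1 + s * (p.1 - g.1); rw [hs]; field_simp; ring)
    have hse : s * (p.1 - g.1) = z.1 - g.1 := div_mul_cancel₀ _ hne
    have hfin : s * (p.2 - g.2) ≤ a * (m.2 - g.2) := by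
      have h1 := mul_le_mul_of_nonneg_left key1 ha0
      have hAneg : p.1 - g.1 < 0 := by linarith
      have hse2 : s * (p.1 - g.1) * (p.2 - g.2) = a * (m.1 - g.1) * (p.2 - g.2) := by
        rw [hse, hz1]; ring
      nlinarith [hse2, h1, hAneg]
    have ht2' : t.2 ≤ g.2 + s * (p.2 - g.2) := ht2
    linarith [ht2', hfin, hz2.ge, hz2.le]
  · -- left part : above the edge line
    have hzx1 : m.1 ≤ z.1 := by
      have h1 : 1 * (m.1 - g.1) ≤ a * (m.1 - g.1) :=
        mul_le_mul_of_nonpos_right ha1 (by linarith)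
      linarith [hz1.le, hz1.ge]
    have hx1 : (T.v i).1 ≤ z.1 := by linarith [hmx.1]
    have hx2 : z.1 ≤ (T.v (i+1)).1 := by linarith
    have habove := T.seg_above_edge hi hm K0 ha0 ha1 hz1 hz2 hx1 hx2
    have hteq : t = T.ept i z.1 :=
      T.graph ht (T.edge_subset_carrier hi (T.ept_mem hi hx1 hx2)) (by rw [ept_fst]; exact htz)
    rw [hteq]
    exact habove

lemma affine_le_limit {A B d c : ℝ} (hdc : d < c)
    (H : ∀ x, d < x → x < c → 0 ≤ A * x + B) : 0 ≤ A * c + B := by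
  rcases le_or_gt 0 A with hA | hA
  · have h := H ((d+c)/2) (by linarith) (by linarith)
    nlinarith
  · by_contra hneg
    push_neg at hneg
    have hroot : -B/A < c := by
      rw [div_lt_iff_of_neg hA]; linarith
    have hmc : max d (-B/A) < c := max_lt hdc hroot
    set x := (max d (-B/A) + c)/2 with hx
    have hd1 : d < x := by
      have h1 := le_max_left d (-B/A)
      rw [hx]; linarith
    have hx2 : x < c := by rw [hx]; linarith
    have hx3 : -B/A < x := by
      have h1 := le_max_right d (-B/A)
      rw [hx]; linarith
    have h := H x hd1 hx2
    have h2 : A * x < A * (-B/A) := mul_lt_mul_of_neg_left hx3 hA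
    have hAne : A ≠ 0 := ne_of_lt hA
    have h3 : A * (-B/A) = -B := by field_simp
    linarith

lemma affine_le_limit_right {A B c d : ℝ} (hcd : c < d)
    (H : ∀ x, c < x → x < d → 0 ≤ A * x + B) : 0 ≤ A * c + B := by
  have h := affine_le_limit (A := -A) (B := B) (d := -d) (c := -c) (by linarith)
    (fun x h1 h2 => by have := H (-x) (by linarith) (by linarith); nlinarith)
  nlinarith [h]

lemma affine_le_limit' {a b a' b' d c : ℝ} (hdc : d < c)
    (H : ∀ x, d < x → x < c → a * x + b ≤ a' * x + b') : a * c + b ≤ a' * c + b' := by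
  have h := affine_le_limit (A := a' - a) (B := b' - b) hdc
    (fun x h1 h2 => by nlinarith [H x h1 h2])
  nlinarith [h]

lemma affine_le_limit_right' {a b a' b' c d : ℝ} (hcd : c < d)
    (H : ∀ x, c < x → x < d → a * x + b ≤ a' * x + b') : a * c + b ≤ a' * c + b' := by
  have h := affine_le_limit_right (A := a' - a) (B := b' - b) hcd
    (fun x h1 h2 => by nlinarith [H x h1 h2])
  nlinarith [h]

lemma left_approach (T : Terrain) {t : ℝ × ℝ} (ht : t ∈ T.carrier) (h0 : (T.v 0).1 < t.1) :
    ∃ j, j + 1 < T.n ∧ t ∈ T.edge j ∧ (T.v j).1 < t.1 := by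
  obtain ⟨j, hj, htj⟩ := T.carrier_elim ht
  rcases lt_or_ge (T.v j).1 t.1 with h | h
  · exact ⟨j, hj, htj, h⟩
  · have hx := T.edge_x_mem hj htj
    have ht1 : t.1 = (T.v j).1 := le_antisymm h hx.1
    have hj0 : j ≠ 0 := by rintro rfl; rw [ht1] at h0; exact lt_irrefl _ h0
    have hteq : t = T.v j := by rw [T.mem_ept hj htj, ht1, T.ept_left hj]
    obtain ⟨k, rfl⟩ : ∃ k, j = k + 1 := ⟨j - 1, by omega⟩
    exact ⟨k, by omega, by rw [hteq]; exact right_mem_segment ℝ _ _,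
      by rw [ht1]; exact T.mono k (k+1) (by omega) (by omega)⟩

lemma right_approach (T : Terrain) {t : ℝ × ℝ} (ht : t ∈ T.carrier)
    (h0 : t.1 < (T.v (T.n - 1)).1) :
    ∃ j, j + 1 < T.n ∧ t ∈ T.edge j ∧ t.1 < (T.v (j+1)).1 := by
  obtain ⟨j, hj, htj⟩ := T.carrier_elim ht
  rcases lt_or_ge t.1 (T.v (j+1)).1 with h | h
  · exact ⟨j, hj, htj, h⟩
  · have hx := T.edge_x_mem hj htj
    have ht1 : t.1 = (T.v (j+1)).1 := le_antisymm hx.2 h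
    have hj0 : j + 1 ≠ T.n - 1 := by
      intro he; rw [ht1, he] at h0; exact lt_irrefl _ h0
    have hteq : t = T.v (j+1) := by rw [T.mem_ept hj htj, ht1, T.ept_right hj]
    refine ⟨j+1, by omega, by rw [hteq]; exact left_mem_segment ℝ _ _, ?_⟩
    rw [ht1]; exact T.mono (j+1) (j+2) (by omega) (by omega)

lemma limitLeft (T : Terrain) {i : ℕ} (hi : i + 1 < T.n) {g : ℝ × ℝ} (hg : g ∈ T.carrier)
    {d c : ℝ} (hd : (T.v i).1 ≤ d) (hdc : d < c)
    (H : ∀ x, d < x → x < c → T.sees g (T.ept i x)) : T.sees g (T.ept i c) := by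
  intro z hz t ht htz
  obtain ⟨sp, hs0, hs1, hz1, hz2⟩ := seg_iff.mp hz
  rw [ept_fst] at hz1
  rcases eq_or_lt_of_le hs0 with hs00 | hs0pos
  · have hzg : z = g := by
      apply Prod.ext
      · rw [hz1, ← hs00]; ring
      · rw [hz2, ← hs00]; ring
    rw [hzg] at htz ⊢
    rw [T.graph ht hg htz]
  · have hx0g : (T.v 0).1 ≤ g.1 := (T.carrier_x_bounds hg).1
    have hcx : (T.v 0).1 < c :=
      lt_of_le_of_lt (le_trans (T.mono_le (Nat.zero_le i) (by omega)) hd) hdc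
    have hz1pos : (T.v 0).1 < z.1 := by nlinarith [hz1.le, hz1.ge]
    obtain ⟨j, hj, htj, hjx⟩ := T.left_approach ht (by rw [htz]; exact hz1pos)
    have hdj := T.dpos hj
    have htup := (T.edge_x_mem hj htj).2
    -- threshold
    set q : ℝ := ((T.v j).1 - g.1 + sp * g.1) / sp with hq
    have hq_lt_c : q < c := by
      rw [hq, div_lt_iff₀ hs0pos]
      have h1 : (T.v j).1 < z.1 := by rw [← htz]; exact hjx
      nlinarith [hz1.le, hz1.ge]
    have hd'c : max d q < c := max_lt hdc hq_lt_c
    -- pointwise inequality in affine form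
    set A1 : ℝ := sp * ((T.v (j+1)).2 - (T.v j).2) / ((T.v (j+1)).1 - (T.v j).1) with hA1
    set B1 : ℝ := (T.v j).2 + (g.1 - sp * g.1 - (T.v j).1) * ((T.v (j+1)).2 - (T.v j).2) / ((T.v (j+1)).1 - (T.v j).1) with hB1
    set A2 : ℝ := sp * ((T.v (i+1)).2 - (T.v i).2) / ((T.v (i+1)).1 - (T.v i).1) with hA2
    set B2 : ℝ := g.2 + sp * ((T.v i).2 - g.2) + sp * (- (T.v i).1) * ((T.v (i+1)).2 - (T.v i).2) / ((T.v (i+1)).1 - (T.v i).1) with hB2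
    have hform1 : ∀ x : ℝ, (T.ept j (g.1 + sp * (x - g.1))).2 = A1 * x + B1 := by
      intro x
      show (T.v j).2 + (g.1 + sp * (x - g.1) - (T.v j).1) / ((T.v (j+1)).1 - (T.v j).1) * ((T.v (j+1)).2 - (T.v j).2) = A1 * x + B1
      rw [hA1, hB1]; ring
    have hform2 : ∀ x : ℝ, g.2 + sp * ((T.ept i x).2 - g.2) = A2 * x + B2 := by
      intro x
      show g.2 + sp * (((T.v i).2 + (x - (T.v i).1) / ((T.v (i+1)).1 - (T.v i).1) * ((T.v (i+1)).2 - (T.v i).2)) - g.2) = A2 * x + B2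
      rw [hA2, hB2]; ring
    have key : ∀ x, max d q < x → x < c → A1 * x + B1 ≤ A2 * x + B2 := by
      intro x h1 h2
      have hxd : d < x := lt_of_le_of_lt (le_max_left _ _) h1
      have hxq : q < x := lt_of_le_of_lt (le_max_right _ _) h1
      have hwgt : (T.v j).1 < g.1 + sp * (x - g.1) := by
        rw [hq, div_lt_iff₀ hs0pos] at hxq
        nlinarith [hxq]
      have hwle : g.1 + sp * (x - g.1) ≤ (T.v (j+1)).1 := by
        have h3 : g.1 + sp * (x - g.1) < z.1 := by
          rw [hz1]; nlinarith
        rw [← htz] at h3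
        linarith
      have htx := T.ept_mem hj hwgt.le hwle
      have hineq := H x hxd h2 _ (seg_pt hs0 hs1 (a := g) (b := T.ept i x)) _
        (T.edge_subset_carrier hj htx) rfl
      rw [← hform1 x, ← hform2 x]
      exact hineq
    have hfinal := affine_le_limit' hd'c key
    rw [← hform1 c, ← hform2 c] at hfinal
    have htt : t = T.ept j t.1 := T.mem_ept hj htj
    have hwc : g.1 + sp * (c - g.1) = t.1 := by rw [htz, hz1]
    rw [hwc] at hfinal
    rw [← htt] at hfinal
    rw [hz2]
    exact hfinal

lemma limitRight (T : Terrain) {i : ℕ} (hi : i + 1 < T.n) {g : ℝ × ℝ} (hg : g ∈ T.carrier)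
    {c d : ℝ} (hcd : c < d) (hd : d ≤ (T.v (i+1)).1)
    (H : ∀ x, c < x → x < d → T.sees g (T.ept i x)) : T.sees g (T.ept i c) := by
  intro z hz t ht htz
  obtain ⟨sp, hs0, hs1, hz1, hz2⟩ := seg_iff.mp hz
  rw [ept_fst] at hz1
  rcases eq_or_lt_of_le hs0 with hs00 | hs0pos
  · have hzg : z = g := by
      apply Prod.ext
      · rw [hz1, ← hs00]; ring
      · rw [hz2, ← hs00]; ring
    rw [hzg] at htz ⊢
    rw [T.graph ht hg htz]
  · have hx0g : g.1 ≤ (T.v (T.n - 1)).1 := (T.carrier_x_bounds hg).2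
    have hcx : c < (T.v (T.n - 1)).1 :=
      lt_of_lt_of_le hcd (le_trans hd (T.mono_le (by omega) (by omega)))
    have hz1pos : z.1 < (T.v (T.n - 1)).1 := by nlinarith [hz1.le, hz1.ge]
    obtain ⟨j, hj, htj, hjx⟩ := T.right_approach ht (by rw [htz]; exact hz1pos)
    have hdj := T.dpos hj
    have htlo := (T.edge_x_mem hj htj).1
    set q : ℝ := ((T.v (j+1)).1 - g.1 + sp * g.1) / sp with hq
    have hq_gt_c : c < q := by
      rw [hq, lt_div_iff₀ hs0pos]
      have h1 : z.1 < (T.v (j+1)).1 := by rw [← htz]; exact hjx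
      nlinarith [hz1.le, hz1.ge]
    have hcd' : c < min d q := lt_min hcd hq_gt_c
    set A1 : ℝ := sp * ((T.v (j+1)).2 - (T.v j).2) / ((T.v (j+1)).1 - (T.v j).1) with hA1
    set B1 : ℝ := (T.v j).2 + (g.1 - sp * g.1 - (T.v j).1) * ((T.v (j+1)).2 - (T.v j).2) / ((T.v (j+1)).1 - (T.v j).1) with hB1
    set A2 : ℝ := sp * ((T.v (i+1)).2 - (T.v i).2) / ((T.v (i+1)).1 - (T.v i).1) with hA2
    set B2 : ℝ := g.2 + sp * ((T.v i).2 - g.2) + sp * (- (T.v i).1) * ((T.v (i+1)).2 - (T.v i).2) / ((T.v (i+1)).1 - (T.v i).1) with hB2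
    have hform1 : ∀ x : ℝ, (T.ept j (g.1 + sp * (x - g.1))).2 = A1 * x + B1 := by
      intro x
      show (T.v j).2 + (g.1 + sp * (x - g.1) - (T.v j).1) / ((T.v (j+1)).1 - (T.v j).1) * ((T.v (j+1)).2 - (T.v j).2) = A1 * x + B1
      rw [hA1, hB1]; ring
    have hform2 : ∀ x : ℝ, g.2 + sp * ((T.ept i x).2 - g.2) = A2 * x + B2 := by
      intro x
      show g.2 + sp * (((T.v i).2 + (x - (T.v i).1) / ((T.v (i+1)).1 - (T.v i).1) * ((T.v (i+1)).2 - (T.v i).2)) - g.2) = A2 * x + B2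
      rw [hA2, hB2]; ring
    have key : ∀ x, c < x → x < min d q → A1 * x + B1 ≤ A2 * x + B2 := by
      intro x h1 h2
      have hxd : x < d := lt_of_lt_of_le h2 (min_le_left _ _)
      have hxq : x < q := lt_of_lt_of_le h2 (min_le_right _ _)
      have hwlt : g.1 + sp * (x - g.1) < (T.v (j+1)).1 := by
        rw [hq, lt_div_iff₀ hs0pos] at hxq
        nlinarith [hxq]
      have hwge : (T.v j).1 ≤ g.1 + sp * (x - g.1) := by
        have h3 : z.1 < g.1 + sp * (x - g.1) := by
          rw [hz1]; nlinarith
        rw [← htz] at h3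
        linarith
      have htx := T.ept_mem hj hwge hwlt.le
      have hineq := H x h1 hxd _ (seg_pt hs0 hs1 (a := g) (b := T.ept i x)) _
        (T.edge_subset_carrier hj htx) rfl
      rw [← hform1 x, ← hform2 x]
      exact hineq
    have hfinal := affine_le_limit_right' hcd' key
    rw [← hform1 c, ← hform2 c] at hfinal
    have htt : t = T.ept j t.1 := T.mem_ept hj htj
    have hwc : g.1 + sp * (c - g.1) = t.1 := by rw [htz, hz1]
    rw [hwc] at hfinal
    rw [← htt] at hfinal
    rw [hz2]
    exact hfinal

lemma visSet_elim (T : Terrain) {S : Set (ℝ × ℝ)} {q : ℝ × ℝ} (h : q ∈ T.visSet S) :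
    ∃ g ∈ S, q ∈ T.vis g := by
  rw [visSet, mem_iUnion₂] at h
  obtain ⟨g, hg, h2⟩ := h
  exact ⟨g, hg, h2⟩

lemma visSet_intro (T : Terrain) {S : Set (ℝ × ℝ)} {q g : ℝ × ℝ} (hg : g ∈ S)
    (h : q ∈ T.vis g) : q ∈ T.visSet S := by
  rw [visSet, mem_iUnion₂]
  exact ⟨g, hg, h⟩

lemma vis_mem (T : Terrain) {q g : ℝ × ℝ} (hc : q ∈ T.carrier) (h : T.sees g q) :
    q ∈ T.vis g := ⟨hc, h⟩

lemma intEdge_elim (T : Terrain) {i : ℕ} (hi : i + 1 < T.n) {q : ℝ × ℝ}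
    (h : q ∈ T.intEdge i) :
    q ∈ T.edge i ∧ (T.v i).1 < q.1 ∧ q.1 < (T.v (i+1)).1 := by
  obtain ⟨hq, hne⟩ := h
  simp only [mem_insert_iff, mem_singleton_iff, not_or] at hne
  have hb := T.edge_x_mem hi hq
  refine ⟨hq, lt_of_le_of_ne hb.1 ?_, lt_of_le_of_ne hb.2 ?_⟩
  · intro he
    exact hne.1 (by rw [T.mem_ept hi hq, ← he, T.ept_left hi])
  · intro he
    exact hne.2 (by rw [T.mem_ept hi hq, he, T.ept_right hi])


end Terrain

/-- If `g_ℓ` is a left-guard and `g_r` a right-guard of a critical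
edge `e`, then `V(g_ℓ) ∩ e ∩ V(g_r) ≠ ∅`. -/
theorem leftGuard_rightGuard_vis_intersect (T : Terrain) (C : Finset (ℝ × ℝ))
    (hC : T.IsCover ↑C) (i : ℕ) (hi : i + 1 < T.n)
    (gl gr : ℝ × ℝ) (hgl : gl ∈ C) (hgr : gr ∈ C)
    (hleft : T.IsLeftGuard ↑C gl i) (hright : T.IsRightGuard ↑C gr i) :
    (T.vis gl ∩ T.edge i ∩ T.vis gr).Nonempty := by
  obtain ⟨hCsub, hCcov⟩ := hC
  have hd := T.dpos hi
  have hxgl : gl.1 < (T.v i).1 := hleft.1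
  have hxgr : (T.v (i+1)).1 < gr.1 := hright.1
  have hglC : gl ∈ (↑C : Set (ℝ × ℝ)) := by exact_mod_cast hgl
  have hgrC : gr ∈ (↑C : Set (ℝ × ℝ)) := by exact_mod_cast hgr
  have hglcar : gl ∈ T.carrier := hCsub hglC
  have hgrcar : gr ∈ T.carrier := hCsub hgrC
  -- extraction of the uniquely-seen points
  have extract : ∀ g0 ∈ (↑C : Set (ℝ × ℝ)), ∀ p ∈ T.intEdge i,
      p ∉ T.visSet (↑C \ {g0}) →
      T.sees g0 p ∧ ∀ g' ∈ (↑C : Set (ℝ × ℝ)), g' ≠ g0 → ¬ T.sees g' p := by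
    intro g0 hg0 p hp hpN
    have hpE := (T.intEdge_elim hi hp).1
    have hpc : p ∈ T.carrier := T.edge_subset_carrier hi hpE
    have hpv : p ∈ T.visSet ↑C := by rw [hCcov]; exact hpc
    obtain ⟨g', hg', hg'v⟩ := T.visSet_elim hpv
    have hNsee : ∀ g'' ∈ (↑C : Set (ℝ × ℝ)), g'' ≠ g0 → ¬ T.sees g'' p := by
      intro g'' hg'' hne hsee
      exact hpN (T.visSet_intro ⟨hg'', hne⟩ (T.vis_mem hpc hsee))
    have hg'eq : g' = g0 := by
      by_contra hne
      exact hNsee g' hg' hne hg'v.2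
    exact ⟨hg'eq ▸ hg'v.2, hNsee⟩
  obtain ⟨pl, hplI, hplN⟩ := Set.not_subset.mp hleft.2.2
  obtain ⟨pr, hprI, hprN⟩ := Set.not_subset.mp hright.2.2
  obtain ⟨hplE, hplx1, hplx2⟩ := T.intEdge_elim hi hplI
  obtain ⟨hprE, hprx1, hprx2⟩ := T.intEdge_elim hi hprI
  obtain ⟨hseegl_pl, hNpl⟩ := extract gl hglC pl hplI hplN
  obtain ⟨hseegr_pr, hNpr⟩ := extract gr hgrC pr hprI hprN
  have hglgr : gl ≠ gr := fun he => by rw [he] at hxgl; linarith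
  have hgl_not_pr : ¬ T.sees gl pr := hNpr gl hglC hglgr
  have hgr_not_pl : ¬ T.sees gr pl := hNpl gr hgrC hglgr.symm
  -- pr is strictly left of pl
  have hlr : pr.1 < pl.1 := by
    by_contra h
    push_neg at h
    exact hgl_not_pr
      (T.lemmaA hi hplE hplx1 hplx2 (by linarith) hseegl_pl hprE h)
  -- suppose there is no common point
  by_contra hcon
  have nocommon : ∀ x, (T.v i).1 ≤ x → x ≤ (T.v (i+1)).1 →
      ¬ (T.sees gl (T.ept i x) ∧ T.sees gr (T.ept i x)) := by
    rintro x h1 h2 ⟨hvl, hvr⟩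
    have hE := T.ept_mem hi h1 h2
    have hcar := T.edge_subset_carrier hi hE
    exact hcon ⟨T.ept i x, ⟨⟨hcar, hvl⟩, hE⟩, ⟨hcar, hvr⟩⟩
  -- dichotomy on [pr.1, pl.1]
  have CL : ∀ x, pr.1 ≤ x → x ≤ pl.1 →
      T.sees gl (T.ept i x) ∨ T.sees gr (T.ept i x) := by
    intro x h1 h2
    have hx1 : (T.v i).1 < x := lt_of_lt_of_le hprx1 h1
    have hx2 : x < (T.v (i+1)).1 := lt_of_le_of_lt h2 hplx2
    have hE := T.ept_mem hi hx1.le hx2.le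
    have hcar := T.edge_subset_carrier hi hE
    have hv : T.ept i x ∈ T.visSet ↑C := by rw [hCcov]; exact hcar
    obtain ⟨g0, hg0, hg0v⟩ := T.visSet_elim hv
    have hsee0 : T.sees g0 (T.ept i x) := hg0v.2
    rcases lt_trichotomy g0.1 x with hlt | heq | hgt
    · -- g0 strictly left : it sees pl, so g0 = gl
      have hseepl : T.sees g0 pl :=
        T.lemmaA hi hE (by exact hx1) (by exact hx2)
          (by exact hlt) hsee0 hplE (by exact h2)
      have : g0 = gl := by
        by_contra hne
        exact hNpl g0 hg0 hne hseepl
      exact Or.inl (this ▸ hsee0)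
    · -- same x-coordinate : g0 is the edge point itself
      have hg0eq : g0 = T.ept i x :=
        T.graph (hCsub hg0) hcar (by exact heq)
      have hseepl : T.sees g0 pl :=
        T.same_edge_sees hi (hg0eq ▸ hE) hplE
      have : g0 = gl := by
        by_contra hne
        exact hNpl g0 hg0 hne hseepl
      rw [this] at heq
      linarith
    · -- g0 strictly right : it sees pr, so g0 = gr
      have hseepr : T.sees g0 pr :=
        T.lemmaB hi hE (by exact hx1) (by exact hx2)
          (by exact hgt) hsee0 hprE (by exact h1)
      have : g0 = gr := by
        by_contra hne
        exact hNpr g0 hg0 hne hseepr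
      exact Or.inr (this ▸ hsee0)
  -- supremum of x-coordinates seen by gr
  set S : Set ℝ := {x | pr.1 ≤ x ∧ x ≤ pl.1 ∧ T.sees gr (T.ept i x)} with hS
  have heptpr : T.ept i pr.1 = pr := (T.mem_ept hi hprE).symm
  have heptpl : T.ept i pl.1 = pl := (T.mem_ept hi hplE).symm
  have hprS : pr.1 ∈ S := ⟨le_refl _, hlr.le, by rw [heptpr]; exact hseegr_pr⟩
  have hSne : S.Nonempty := ⟨pr.1, hprS⟩
  have hSbdd : BddAbove S := ⟨pl.1, fun x hx => hx.2.1⟩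
  set c : ℝ := sSup S with hc
  have hc1 : pr.1 ≤ c := le_csSup hSbdd hprS
  have hc2 : c ≤ pl.1 := csSup_le hSne (fun x hx => hx.2.1)
  have hcx1 : (T.v i).1 < c := lt_of_lt_of_le hprx1 hc1
  have hcx2 : c < (T.v (i+1)).1 := lt_of_le_of_lt hc2 hplx2
  rcases CL c hc1 hc2 with HL | HR
  · -- gl sees the point at c
    rcases eq_or_lt_of_le hc1 with hceq | hclt
    · -- c = pr.1 : gr also sees it
      refine nocommon c hcx1.le hcx2.le ⟨HL, ?_⟩
      rw [← hceq, heptpr]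
      exact hseegr_pr
    · -- pr.1 < c : gr sees everything in [pr.1, c), pass to the limit
      have Hgr : ∀ x, pr.1 < x → x < c → T.sees gr (T.ept i x) := by
        intro x h1 h2
        obtain ⟨b, hbS, hxb⟩ := exists_lt_of_lt_csSup hSne h2
        have hbE := T.ept_mem hi (le_trans hprx1.le hbS.1) (le_trans hbS.2.1 hplx2.le)
        exact T.lemmaB hi hbE
          (by exact lt_of_lt_of_le hprx1 hbS.1)
          (by exact lt_of_le_of_lt hbS.2.1 hplx2)
          (by show (b:ℝ) < gr.1; linarith [hbS.2.1]) hbS.2.2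
          (T.ept_mem hi (by linarith) (by linarith))
          (by exact hxb.le)
      have hgrc := T.limitLeft hi hgrcar hprx1.le hclt Hgr
      exact nocommon c hcx1.le hcx2.le ⟨HL, hgrc⟩
  · -- gr sees the point at c
    rcases eq_or_lt_of_le hc2 with hceq | hclt
    · -- c = pl.1 : gl also sees it
      refine nocommon c hcx1.le hcx2.le ⟨?_, HR⟩
      rw [hceq, heptpl]
      exact hseegl_pl
    · -- c < pl.1 : gl sees everything in (c, pl.1], pass to the limit
      have Hgl : ∀ x, c < x → x < pl.1 → T.sees gl (T.ept i x) := by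
        intro x h1 h2
        rcases CL x (le_trans hc1 h1.le) h2.le with h | h
        · exact h
        · exfalso
          have : x ≤ c := le_csSup hSbdd ⟨le_trans hc1 h1.le, h2.le, h⟩
          linarith
      have hglc := T.limitRight hi hglcar hclt hplx2.le Hgl
      exact nocommon c hcx1.le hcx2.le ⟨hglc, HR⟩
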